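/- Fix n, p ∈ ℕ, observations y ∈ ℝⁿ with yᵢ > 0 for all i, covariate vectors x₁, …, xₙ ∈ ℝᵖ, and λ ≥ 0. Define f(β, γ) = Σ_{i=1}^n [e^{xᵢᵀβ + γᵢ} − (xᵢᵀβ + γᵢ)yᵢ] + λ·|{i : γᵢ ≠ 0}| and h(β) = Σ_{i=1}^n min{e^{xᵢᵀβ} − (xᵢᵀβ)yᵢ, λᵢ*}, where λᵢ* = λ − yᵢ·log yᵢ + yᵢ. Then the infimum of f over (β, γ) ∈ ℝᵖ × ℝⁿ equals the infimum of h over β ∈ ℝᵖ. -/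

import Mathlib

open scoped Classical

theorem stmt_6 (n p : ℕ) (y : Fin n → ℝ) (hy : ∀ i, 0 < y i)
    (x : Fin n → Fin p → ℝ) (lam : ℝ) (hlam : 0 ≤ lam) :
    (⨅ bg : (Fin p → ℝ) × (Fin n → ℝ),
        (∑ i, (Real.exp ((∑ j, x i j * bg.1 j) + bg.2 i)
            - ((∑ j, x i j * bg.1 j) + bg.2 i) * y i))
          + lam * ((Finset.univ.filter fun i => bg.2 i ≠ 0).card : ℝ))
      = ⨅ β : Fin p → ℝ,
          ∑ i, min (Real.exp (∑ j, x i j * β j) - (∑ j, x i j * β j) * y i)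
            (lam - y i * Real.log (y i) + y i) := by
  have key : ∀ (t yi : ℝ), 0 < yi → yi - yi * Real.log yi ≤ Real.exp t - t * yi := by
    intro t yi hyi
    have h1 : t - Real.log yi + 1 ≤ Real.exp (t - Real.log yi) := Real.add_one_le_exp _
    have h2 : Real.exp t = yi * Real.exp (t - Real.log yi) := by
      have h3 := Real.exp_add (Real.log yi) (t - Real.log yi)
      have h4 : Real.log yi + (t - Real.log yi) = t := by ring
      rw [h4, Real.exp_log hyi] at h3
      exact h3
    nlinarith [mul_le_mul_of_nonneg_left h1 hyi.le]
  set C : ℝ := ∑ i, (y i - y i * Real.log (y i)) with hC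
  have hcard : ∀ g : Fin n → ℝ, lam * ((Finset.univ.filter fun i => g i ≠ 0).card : ℝ)
      = ∑ i, (if g i ≠ 0 then lam else 0) := by
    intro g
    rw [← Finset.sum_filter, Finset.sum_const, nsmul_eq_mul, mul_comm]
  have hFbdd : ∀ bg : (Fin p → ℝ) × (Fin n → ℝ), C ≤
      (∑ i, (Real.exp ((∑ j, x i j * bg.1 j) + bg.2 i)
            - ((∑ j, x i j * bg.1 j) + bg.2 i) * y i))
          + lam * ((Finset.univ.filter fun i => bg.2 i ≠ 0).card : ℝ) := by
    intro bg
    have h1 : C ≤ ∑ i, (Real.exp ((∑ j, x i j * bg.1 j) + bg.2 i)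
        - ((∑ j, x i j * bg.1 j) + bg.2 i) * y i) :=
      Finset.sum_le_sum fun i _ => key _ _ (hy i)
    have h2 : (0:ℝ) ≤ lam * ((Finset.univ.filter fun i => bg.2 i ≠ 0).card : ℝ) :=
      mul_nonneg hlam (Nat.cast_nonneg _)
    linarith
  have hHbdd : ∀ β : Fin p → ℝ, C ≤
      ∑ i, min (Real.exp (∑ j, x i j * β j) - (∑ j, x i j * β j) * y i)
        (lam - y i * Real.log (y i) + y i) := by
    intro β
    refine Finset.sum_le_sum fun i _ => le_min (key _ _ (hy i)) ?_
    have := hy i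
    linarith
  apply le_antisymm
  · apply le_ciInf
    intro β
    set γ : Fin n → ℝ := fun i =>
      if Real.exp (∑ j, x i j * β j) - (∑ j, x i j * β j) * y i
          ≤ lam - y i * Real.log (y i) + y i then 0
      else Real.log (y i) - ∑ j, x i j * β j with hγ
    refine le_trans (ciInf_le ⟨C, fun r hr => ?_⟩ (β, γ)) ?_
    · obtain ⟨bg, rfl⟩ := hr
      exact hFbdd bg
    · rw [hcard, ← Finset.sum_add_distrib]
      refine Finset.sum_le_sum fun i _ => ?_
      by_cases h : Real.exp (∑ j, x i j * β j) - (∑ j, x i j * β j) * y i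
          ≤ lam - y i * Real.log (y i) + y i
      · have hγ0 : γ i = 0 := if_pos h
        dsimp only
        simp only [hγ0]
        rw [if_neg (by simp), min_eq_left h]
        simp
      · have hlt := not_le.mp h
        have hθ : Real.log (y i) - ∑ j, x i j * β j ≠ 0 := by
          intro h0
          have hθeq : (∑ j, x i j * β j) = Real.log (y i) := by
            have := sub_eq_zero.mp h0
            linarith
          rw [hθeq, Real.exp_log (hy i)] at hlt
          nlinarith
        have hγi : γ i = Real.log (y i) - ∑ j, x i j * β j := if_neg h
        dsimp only
        have heq : (∑ j, x i j * β j) + (Real.log (y i) - ∑ j, x i j * β j) = Real.log (y i) := by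
          ring
        simp only [hγi]
        rw [if_pos hθ, heq, Real.exp_log (hy i)]
        rw [min_eq_right (le_of_lt hlt)]
        exact le_of_eq (by ring)
  · apply le_ciInf
    intro bg
    refine le_trans (ciInf_le ⟨C, fun r hr => ?_⟩ bg.1) ?_
    · obtain ⟨β, rfl⟩ := hr
      exact hHbdd β
    · rw [hcard, ← Finset.sum_add_distrib]
      refine Finset.sum_le_sum fun i _ => ?_
      by_cases h : bg.2 i = 0
      · rw [h]
        simp only [ne_eq, not_true_eq_false, if_neg, add_zero, not_not]
        simpa using min_le_left (Real.exp ((∑ j, x i j * bg.1 j))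
          - ((∑ j, x i j * bg.1 j)) * y i) (lam - y i * Real.log (y i) + y i)
      · rw [if_pos h]
        have h1 := key ((∑ j, x i j * bg.1 j) + bg.2 i) (y i) (hy i)
        have h2 : min (Real.exp (∑ j, x i j * bg.1 j) - (∑ j, x i j * bg.1 j) * y i)
            (lam - y i * Real.log (y i) + y i) ≤ lam - y i * Real.log (y i) + y i :=
          min_le_right _ _
        linarith
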